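/- Let T>0, d≥1, Ω⊆ℝ^d be a bounded measurable set, and σ:ℝ→ℝ be globally Lipschitz; let Σ:ℝ^d→ℝ^d be the coordinatewise application of σ, i.e. Σ(x)=(σ(x_1),…,σ(x_d)). Fix m∈ℤ₊ and weight parameters A_i,W_i∈ℝ^{d×d}, B_i∈ℝ^d for i=0,…,m−1. For each N∈ℤ₊ define the T/N-periodic-in-time vector field Q^N:[0,T]×ℝ^d→ℝ^d by Q^N(t+nT/N, x)= m·A_i Σ(W_i x + B_i) for t∈[iT/(mN),(i+1)T/(mN)), for all n∈{0,…,N−1}, i∈{0,…,m−1}, x∈ℝ^d. Then Q^N converges weakly-* in L^∞((0,T)×Ω)^d to the time-independent vector field Q(x)=Σ_{i=0}^{m−1} A_i Σ(W_i x + B_i); that is, for every φ∈L¹((0,T)×Ω;ℝ^d), ∫₀^T∫_Ω Q^N(t,x)·φ(t,x) dx dt → ∫₀^T∫_Ω Q(x)·φ(t,x) dx dt as N→∞. -/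

import Mathlib

open MeasureTheory Filter

open Set

/-- Index of the subinterval of `[0,T)` of length `T/M` containing `t`. -/
noncomputable def gridIdx (T : ℝ) (M : ℕ) (t : ℝ) : ℕ := (⌊t * M / T⌋).toNat

lemma floor_eq_on_Ico {T : ℝ} (hT : 0 < T) {M : ℕ} (hM : 0 < M) {k : ℕ} {t : ℝ}
    (ht : t ∈ Set.Ico ((k : ℝ) * T / M) (((k : ℝ) + 1) * T / M)) :
    ⌊t * M / T⌋ = (k : ℤ) := by
  have hM' : (0:ℝ) < M := by exact_mod_cast hM
  obtain ⟨h1, h2⟩ := ht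
  rw [Int.floor_eq_iff]
  constructor
  · rw [le_div_iff₀ hT]
    rw [div_le_iff₀ hM'] at h1
    push_cast
    nlinarith
  · rw [div_lt_iff₀ hT]
    rw [lt_div_iff₀ hM'] at h2
    push_cast
    nlinarith

lemma gridIdx_eq_on_Ico {T : ℝ} (hT : 0 < T) {M : ℕ} (hM : 0 < M) {k : ℕ} {t : ℝ}
    (ht : t ∈ Set.Ico ((k : ℝ) * T / M) (((k : ℝ) + 1) * T / M)) :
    gridIdx T M t = k := by
  rw [gridIdx, floor_eq_on_Ico hT hM ht, Int.toNat_natCast]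

lemma mem_Ico_gridIdx {T : ℝ} (hT : 0 < T) {M : ℕ} (hM : 0 < M) {t : ℝ}
    (ht : t ∈ Set.Ico (0:ℝ) T) :
    gridIdx T M t < M ∧
      t ∈ Set.Ico ((gridIdx T M t : ℝ) * T / M) (((gridIdx T M t : ℝ) + 1) * T / M) := by
  have hM' : (0:ℝ) < M := by exact_mod_cast hM
  obtain ⟨h0, h1⟩ := ht
  have hnn : (0:ℝ) ≤ t * M / T := by positivity
  have hfl : (0:ℤ) ≤ ⌊t * M / T⌋ := Int.floor_nonneg.2 hnn
  have hcast : ((gridIdx T M t : ℕ) : ℝ) = ((⌊t * M / T⌋ : ℤ) : ℝ) := by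
    rw [gridIdx]
    exact_mod_cast congrArg (fun z : ℤ => (z : ℝ)) (Int.toNat_of_nonneg hfl)
  have hle : ((⌊t * M / T⌋ : ℤ) : ℝ) ≤ t * M / T := Int.floor_le _
  have hlt : t * M / T < ((⌊t * M / T⌋ : ℤ) : ℝ) + 1 := Int.lt_floor_add_one _
  constructor
  · have : t * M / T < M := by
      rw [div_lt_iff₀ hT]
      nlinarith
    have h2 : ((⌊t * M / T⌋ : ℤ) : ℝ) < M := lt_of_le_of_lt hle this
    have : (gridIdx T M t : ℝ) < (M : ℝ) := by rw [hcast]; exact h2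
    exact_mod_cast this
  · constructor
    · rw [div_le_iff₀ hM', hcast]
      rw [le_div_iff₀ hT] at hle
      linarith
    · rw [lt_div_iff₀ hM', hcast]
      rw [div_lt_iff₀ hT] at hlt
      linarith

lemma measurable_gridIdx (T : ℝ) (M : ℕ) : Measurable (gridIdx T M) := by
  have h1 : Measurable fun t : ℝ => t * M / T := by measurability
  exact (measurable_from_top (f := Int.toNat)).comp ((Int.measurable_floor).comp h1)

section
variable {T : ℝ} {m N : ℕ}

/-- Description of the `i`-th phase set within `(0,T)` as a union of intervals. -/
lemma phase_set_eq {T : ℝ} (hT : 0 < T) {m : ℕ} (hm : 0 < m) {N : ℕ} (hN : 0 < N)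
    {i : ℕ} (him : i < m) :
    Set.Ioo 0 T ∩ {t : ℝ | gridIdx T (m * N) t % m = i} =
      (⋃ n ∈ Finset.range N,
        Set.Ico ((n : ℝ) * T / N + (i : ℝ) * T / (m * N)) ((n : ℝ) * T / N + ((i : ℝ) + 1) * T / (m * N)))
        \ {0} := by
  have hM : 0 < m * N := Nat.mul_pos hm hN
  have hM' : (0:ℝ) < (m : ℝ) * N := by positivity
  have hT' : 0 < T := hT
  have hend : ∀ n : ℕ, ((n : ℝ) * T / N + (i : ℝ) * T / (m * N)) = ((m * n + i : ℕ) : ℝ) * T / ((m * N : ℕ) : ℝ) := by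
    intro n
    have hN' : (0:ℝ) < (N : ℝ) := by exact_mod_cast hN
    push_cast
    field_simp
  have hend2 : ∀ n : ℕ, ((n : ℝ) * T / N + ((i : ℝ) + 1) * T / (m * N)) = (((m * n + i : ℕ) : ℝ) + 1) * T / ((m * N : ℕ) : ℝ) := by
    intro n
    have hN' : (0:ℝ) < (N : ℝ) := by exact_mod_cast hN
    push_cast
    field_simp
    ring
  ext t
  simp only [Set.mem_inter_iff, Set.mem_setOf_eq, Set.mem_diff, Set.mem_iUnion,
    Set.mem_singleton_iff, Finset.mem_range, Set.mem_Ioo, Set.mem_Ico]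
  constructor
  · rintro ⟨⟨ht0, htT⟩, hidx⟩
    obtain ⟨hlt, hmem⟩ := mem_Ico_gridIdx hT hM ⟨le_of_lt ht0, htT⟩
    set k := gridIdx T (m * N) t with hk
    refine ⟨⟨k / m, ?_, ?_⟩, ne_of_gt ht0⟩
    · exact Nat.div_lt_of_lt_mul hlt
    · have hkk : m * (k / m) + i = k := by rw [← hidx]; exact Nat.div_add_mod k m
      rw [hend (k / m), hend2 (k / m), hkk]
      exact_mod_cast hmem
  · rintro ⟨⟨n, hn, hmem⟩, ht0⟩
    rw [hend n, hend2 n] at hmem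
    have hidx := gridIdx_eq_on_Ico hT hM hmem
    have hk : m * n + i < m * N := by
      calc m * n + i < m * n + m := by omega
      _ = m * (n + 1) := by ring
      _ ≤ m * N := Nat.mul_le_mul_left m hn
    have hlb : (0:ℝ) ≤ ((m * n + i : ℕ) : ℝ) * T / ((m * N : ℕ) : ℝ) := by positivity
    have hub : (((m * n + i : ℕ) : ℝ) + 1) * T / ((m * N : ℕ) : ℝ) ≤ T := by
      rw [div_le_iff₀ (by positivity)]
      have : ((m * n + i : ℕ) : ℝ) + 1 ≤ ((m * N : ℕ) : ℝ) := by exact_mod_cast hk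
      nlinarith
    refine ⟨⟨lt_of_le_of_ne (le_trans hlb hmem.1) (Ne.symm ht0), lt_of_lt_of_le hmem.2 hub⟩, ?_⟩
    rw [hidx, Nat.mul_add_mod, Nat.mod_eq_of_lt him]

end

lemma per_period {u : ℝ → ℝ} (hu : Continuous u) {a a' bb cc : ℝ} {m : ℕ}
    (h1 : a ≤ bb) (h2 : bb ≤ cc) (h3 : cc ≤ a') (hmc : (m:ℝ) * (cc - bb) = a' - a)
    {ε : ℝ} (hε : 0 ≤ ε) (hδ : ∀ t ∈ Set.Icc a a', |u t - u a| ≤ ε) :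
    |(m:ℝ) * (∫ t in bb..cc, u t) - (∫ t in a..a', u t)| ≤ 2 * (a' - a) * ε := by
  have haa' : a ≤ a' := le_trans h1 (le_trans h2 h3)
  have hi1 : IntervalIntegrable u volume bb cc := hu.intervalIntegrable _ _
  have hi2 : IntervalIntegrable u volume a a' := hu.intervalIntegrable _ _
  set X := ∫ t in bb..cc, (u t - u a) with hX
  set Y := ∫ t in a..a', (u t - u a) with hY
  have e1 : (∫ t in bb..cc, u t) = X + (cc - bb) * u a := by
    rw [hX, intervalIntegral.integral_sub hi1 intervalIntegrable_const,
      intervalIntegral.integral_const, smul_eq_mul]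
    ring
  have e2 : (∫ t in a..a', u t) = Y + (a' - a) * u a := by
    rw [hY, intervalIntegral.integral_sub hi2 intervalIntegrable_const,
      intervalIntegral.integral_const, smul_eq_mul]
    ring
  have key : (m:ℝ) * (∫ t in bb..cc, u t) - (∫ t in a..a', u t) = (m:ℝ) * X - Y := by
    rw [e1, e2]; linear_combination u a * hmc
  have b1 : |X| ≤ ε * (cc - bb) := by
    have := intervalIntegral.norm_integral_le_of_norm_le_const
      (f := fun t => u t - u a) (a := bb) (b := cc) (C := ε) ?_
    · rw [Real.norm_eq_abs] at this
      rwa [abs_of_nonneg (by linarith : (0:ℝ) ≤ cc - bb)] at this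
    · intro x hx
      rw [Set.uIoc_of_le h2] at hx
      exact hδ x ⟨le_trans h1 (le_of_lt hx.1), le_trans hx.2 h3⟩
  have b2 : |Y| ≤ ε * (a' - a) := by
    have := intervalIntegral.norm_integral_le_of_norm_le_const
      (f := fun t => u t - u a) (a := a) (b := a') (C := ε) ?_
    · rw [Real.norm_eq_abs] at this
      rwa [abs_of_nonneg (by linarith : (0:ℝ) ≤ a' - a)] at this
    · intro x hx
      rw [Set.uIoc_of_le haa'] at hx
      exact hδ x ⟨le_of_lt hx.1, hx.2⟩
  rw [key]
  have hmnn : (0:ℝ) ≤ (m:ℝ) := Nat.cast_nonneg m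
  have habs : |(m:ℝ) * X - Y| ≤ (m:ℝ) * |X| + |Y| := by
    calc |(m:ℝ) * X - Y| ≤ |(m:ℝ) * X| + |Y| := abs_sub _ _
      _ = (m:ℝ) * |X| + |Y| := by rw [abs_mul, abs_of_nonneg hmnn]
  have := mul_le_mul_of_nonneg_left b1 hmnn
  nlinarith [hmc, abs_nonneg X, abs_nonneg Y]
lemma grid_est {T : ℝ} (hT : 0 < T) {m : ℕ} (hm : 0 < m) {i : ℕ} (him : i < m)
    {u : ℝ → ℝ} (hu : Continuous u) {N : ℕ} (hN : 0 < N)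
    {ε : ℝ} (hε : 0 ≤ ε)
    (hδ : ∀ s t : ℝ, |s - t| ≤ T / N → |u s - u t| ≤ ε) :
    |(m:ℝ) * (∫ t in Set.Ioo 0 T ∩ {t : ℝ | gridIdx T (m*N) t % m = i}, u t)
      - (∫ t in Set.Ioo 0 T, u t)| ≤ 2 * T * ε := by
  have hN' : (0:ℝ) < N := by exact_mod_cast hN
  have hm' : (0:ℝ) < m := by exact_mod_cast hm
  have hmN' : (0:ℝ) < (m:ℝ) * N := by positivity
  set a : ℕ → ℝ := fun n => (n:ℝ) * T / N with ha
  set bb : ℕ → ℝ := fun n => (n:ℝ) * T / N + (i:ℝ) * T / (m * N) with hbb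
  set cc : ℕ → ℝ := fun n => (n:ℝ) * T / N + ((i:ℝ) + 1) * T / (m * N) with hcc
  have hi1 : (i:ℝ) + 1 ≤ (m:ℝ) := by exact_mod_cast him
  have h_ab : ∀ n : ℕ, a n ≤ bb n := by
    intro n; simp only [ha, hbb]; have : (0:ℝ) ≤ (i:ℝ) * T / (m * N) := by positivity
    linarith
  have h_bc : ∀ n : ℕ, bb n ≤ cc n := by
    intro n; simp only [hbb, hcc]
    have : (i:ℝ) * T / (m * N) ≤ ((i:ℝ) + 1) * T / (m * N) := by
      gcongr
      linarith
    linarith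
  have h_ca : ∀ n : ℕ, cc n ≤ a (n + 1) := by
    intro n; simp only [ha, hcc]
    have key : ((i:ℝ) + 1) * T / (m * N) ≤ T / N := by
      rw [div_le_div_iff₀ hmN' hN']
      nlinarith [mul_le_mul_of_nonneg_right (mul_le_mul_of_nonneg_right hi1 hT.le) hN'.le]
    push_cast
    have : ((n:ℝ) + 1) * T / N = (n:ℝ) * T / N + T / N := by field_simp
    rw [this]
    linarith
  have h_aa : ∀ n : ℕ, a (n + 1) - a n = T / N := by
    intro n; simp only [ha]; push_cast; field_simp; ring
  have h_cb : ∀ n : ℕ, cc n - bb n = T / (m * N) := by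
    intro n; simp only [hbb, hcc]; field_simp; ring
  have hbb0 : ∀ n : ℕ, 0 ≤ bb n := fun n => le_trans (by positivity) (h_ab n)
  have hccT : ∀ n : ℕ, n < N → cc n ≤ T := by
    intro n hn
    have h1 : cc n ≤ a (n + 1) := h_ca n
    have h2 : a (n + 1) ≤ T := by
      simp only [ha]
      rw [div_le_iff₀ hN']
      push_cast
      have : (n:ℝ) + 1 ≤ (N:ℝ) := by exact_mod_cast hn
      nlinarith
    linarith
  -- integral over (0,T) as sum over periods
  have hint : ∀ k : ℕ, k < N → IntervalIntegrable u volume (a k) (a (k + 1)) :=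
    fun k _ => hu.intervalIntegrable _ _
  have E2 : (∫ t in Set.Ioo 0 T, u t) = ∑ n ∈ Finset.range N, ∫ t in a n..a (n + 1), u t := by
    rw [intervalIntegral.sum_integral_adjacent_intervals hint]
    have ha0 : a 0 = 0 := by simp [ha]
    have haN : a N = T := by simp only [ha]; field_simp
    rw [ha0, haN, intervalIntegral.integral_of_le hT.le, integral_Ioc_eq_integral_Ioo]
  -- integral over phase set as sum over periods
  have hsep : ∀ p q : ℕ, p < q → cc p ≤ bb q := by
    intro p q hpq
    have h1 : cc p ≤ a (p + 1) := h_ca p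
    have h2 : a (p + 1) ≤ a q := by
      simp only [ha]
      have hq : ((p:ℝ) + 1) ≤ (q:ℝ) := by exact_mod_cast hpq
      push_cast
      gcongr
    have h3 : a q ≤ bb q := h_ab q
    linarith
  have hdisj : (Finset.range N : Set ℕ).Pairwise
      (Function.onFun Disjoint fun n => Set.Ico (bb n) (cc n)) := by
    intro p hp q hq hpq
    rcases lt_or_gt_of_ne hpq with h | h
    · apply Set.disjoint_left.2
      intro x hx hx'
      have := hsep p q h
      exact absurd hx'.1 (not_le.2 (lt_of_lt_of_le hx.2 this))
    · apply Set.disjoint_left.2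
      intro x hx hx'
      have := hsep q p h
      exact absurd hx.1 (not_le.2 (lt_of_lt_of_le hx'.2 this))
  have hIOn : IntegrableOn u (⋃ n ∈ Finset.range N, Set.Ico (bb n) (cc n)) volume := by
    apply (hu.integrableOn_Icc (a := 0) (b := T)).mono_set
    intro x hx
    simp only [Set.mem_iUnion, Finset.mem_range] at hx
    obtain ⟨n, hn, hx1, hx2⟩ := hx
    exact ⟨le_trans (hbb0 n) hx1, le_trans hx2.le (hccT n hn)⟩
  have E1 : (∫ t in Set.Ioo 0 T ∩ {t : ℝ | gridIdx T (m*N) t % m = i}, u t)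
      = ∑ n ∈ Finset.range N, ∫ t in bb n..cc n, u t := by
    rw [phase_set_eq hT hm hN him]
    have hae : ((⋃ n ∈ Finset.range N, Set.Ico (bb n) (cc n)) \ {0} : Set ℝ)
        =ᵐ[volume] (⋃ n ∈ Finset.range N, Set.Ico (bb n) (cc n)) := by
      rw [diff_ae_eq_self]
      exact measure_mono_null Set.inter_subset_right Real.volume_singleton
    rw [setIntegral_congr_set hae,
      integral_biUnion_finset (Finset.range N) (fun n _ => measurableSet_Ico) hdisj (fun n hn => hIOn.mono_set (Set.subset_biUnion_of_mem (u := fun n => Set.Ico (bb n) (cc n)) hn))]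
    refine Finset.sum_congr rfl fun n _ => ?_
    rw [intervalIntegral.integral_of_le (h_bc n),
      ← Measure.restrict_congr_set Ico_ae_eq_Ioc]
  rw [E1, E2, Finset.mul_sum, ← Finset.sum_sub_distrib]
  calc |∑ n ∈ Finset.range N, ((m:ℝ) * (∫ t in bb n..cc n, u t) - ∫ t in a n..a (n + 1), u t)|
      ≤ ∑ n ∈ Finset.range N, |(m:ℝ) * (∫ t in bb n..cc n, u t) - ∫ t in a n..a (n + 1), u t| :=
        Finset.abs_sum_le_sum_abs _ _
    _ ≤ ∑ n ∈ Finset.range N, 2 * (T / N) * ε := by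
        refine Finset.sum_le_sum fun n hn => ?_
        have hmc : (m:ℝ) * (cc n - bb n) = a (n + 1) - a n := by
          rw [h_cb n, h_aa n]; field_simp
        have := per_period hu (h_ab n) (h_bc n) (h_ca n) hmc hε ?_
        · rw [h_aa n] at this
          exact this
        · intro t ht
          apply hδ
          have : |t - a n| = t - a n := abs_of_nonneg (by linarith [ht.1])
          rw [this]
          have := h_aa n
          linarith [ht.2]
    _ = 2 * T * ε := by
        rw [Finset.sum_const, Finset.card_range, nsmul_eq_mul]
        field_simp
lemma measurableSet_phase (T : ℝ) (M m i : ℕ) :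
    MeasurableSet {t : ℝ | gridIdx T M t % m = i} := by
  have : Measurable fun t : ℝ => gridIdx T M t % m :=
    (measurable_from_top (f := fun k : ℕ => k % m)).comp (measurable_gridIdx T M)
  exact this (measurableSet_singleton i)

lemma key1D {T : ℝ} (hT : 0 < T) {m : ℕ} (hm : 0 < m) {i : ℕ} (him : i < m)
    {h : ℝ → ℝ} (hh : IntegrableOn h (Set.Ioo 0 T)) :
    Tendsto (fun N : ℕ =>
        (m:ℝ) * ∫ t in Set.Ioo 0 T ∩ {t : ℝ | gridIdx T (m * N) t % m = i}, h t)
      atTop (nhds (∫ t in Set.Ioo 0 T, h t)) := by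
  rw [Metric.tendsto_atTop]
  intro ε hε
  have hm' : (0:ℝ) < m := by exact_mod_cast hm
  set ε1 : ℝ := ε / (4 * ((m:ℝ) + 1)) with hε1def
  have hε1 : 0 < ε1 := by positivity
  set ε2 : ℝ := ε / (8 * T + 8) with hε2def
  have hε2 : 0 < ε2 := by positivity
  set h0 : ℝ → ℝ := (Set.Ioo (0:ℝ) T).indicator h with hh0def
  have hh0 : Integrable h0 volume := (integrable_indicator_iff measurableSet_Ioo).2 hh
  obtain ⟨u, hu_supp, hu_close, hu_cont, hu_int⟩ :=
    hh0.exists_hasCompactSupport_integral_sub_le hε1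
  have hUC : UniformContinuous u := hu_supp.uniformContinuous_of_continuous hu_cont
  obtain ⟨δ, hδpos, hδ⟩ := Metric.uniformContinuous_iff.1 hUC ε2 hε2
  obtain ⟨n0, hn0⟩ := exists_nat_gt (T / δ)
  refine ⟨max n0 1, fun N hN => ?_⟩
  have hN1 : 1 ≤ N := le_trans (le_max_right n0 1) hN
  have hNpos : 0 < N := hN1
  have hN' : (0:ℝ) < N := by exact_mod_cast hNpos
  have hTN : T / N < δ := by
    have hn0N : (n0 : ℝ) ≤ N := by exact_mod_cast le_trans (le_max_left n0 1) hN
    have : T / δ < N := lt_of_lt_of_le hn0 hn0N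
    rw [div_lt_iff₀ hN']
    rw [div_lt_iff₀ hδpos] at this
    linarith [mul_comm δ (N:ℝ)]
  -- uniform continuity bound at scale T/N
  have hδ' : ∀ s t : ℝ, |s - t| ≤ T / N → |u s - u t| ≤ ε2 := by
    intro s t hst
    have : dist s t < δ := lt_of_le_of_lt (by rwa [Real.dist_eq]) hTN
    have := hδ this
    rw [Real.dist_eq] at this
    exact this.le
  set A : Set ℝ := Set.Ioo 0 T ∩ {t : ℝ | gridIdx T (m * N) t % m = i} with hAdef
  have hAmeas : MeasurableSet A := measurableSet_Ioo.inter (measurableSet_phase T (m*N) m i)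
  have hAsub : A ⊆ Set.Ioo 0 T := Set.inter_subset_left
  have hhA : IntegrableOn h A := hh.mono_set hAsub
  have huA : IntegrableOn u A := hu_int.integrableOn
  have huT : IntegrableOn u (Set.Ioo 0 T) := hu_int.integrableOn
  have hhuA : IntegrableOn (fun t => h t - u t) A := hhA.sub huA
  have hhuT : IntegrableOn (fun t => h t - u t) (Set.Ioo 0 T) := hh.sub huT
  -- the L¹ error bound on subsets of (0,T)
  have bnd : ∀ B : Set ℝ, MeasurableSet B → B ⊆ Set.Ioo 0 T →
      IntegrableOn (fun t => h t - u t) B → |∫ t in B, (h t - u t)| ≤ ε1 := by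
    intro B hBm hBsub hBint
    have step1 : |∫ t in B, (h t - u t)| ≤ ∫ t in B, |h t - u t| := by
      simpa [Real.norm_eq_abs] using
        norm_integral_le_integral_norm (μ := volume.restrict B) (fun t => h t - u t)
    have step2 : (∫ t in B, |h t - u t|) = ∫ t in B, |h0 t - u t| := by
      refine setIntegral_congr_fun hBm fun t ht => ?_
      rw [hh0def, Set.indicator_of_mem (hBsub ht)]
    have step3 : (∫ t in B, |h0 t - u t|) ≤ ∫ t, |h0 t - u t| := by
      apply setIntegral_le_integral ((hh0.sub hu_int).abs)
      exact Filter.Eventually.of_forall fun x => abs_nonneg _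
    have step4 : (∫ t, |h0 t - u t|) ≤ ε1 := by
      have : (∫ t, |h0 t - u t|) = ∫ t, ‖h0 t - u t‖ := by simp [Real.norm_eq_abs]
      rw [this]; exact hu_close
    linarith
  have split : ∀ B : Set ℝ, IntegrableOn h B → IntegrableOn u B →
      IntegrableOn (fun t => h t - u t) B →
      (∫ t in B, h t) = (∫ t in B, u t) + ∫ t in B, (h t - u t) := by
    intro B h1 h2 h3
    rw [← integral_add h2 h3]
    congr 1
    ext t
    ring
  have grid := grid_est hT hm him hu_cont hNpos hε2.le hδ'
  rw [Real.dist_eq]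
  have decomp : (m:ℝ) * (∫ t in A, h t) - (∫ t in Set.Ioo 0 T, h t)
      = ((m:ℝ) * (∫ t in A, u t) - (∫ t in Set.Ioo 0 T, u t))
        + ((m:ℝ) * (∫ t in A, (h t - u t)) - (∫ t in Set.Ioo 0 T, (h t - u t))) := by
    rw [split A hhA huA hhuA, split _ hh huT hhuT]
    ring
  rw [decomp]
  have b1 : |(m:ℝ) * (∫ t in A, u t) - (∫ t in Set.Ioo 0 T, u t)| ≤ 2 * T * ε2 := grid
  have b2 : |(m:ℝ) * (∫ t in A, (h t - u t)) - (∫ t in Set.Ioo 0 T, (h t - u t))|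
      ≤ (m:ℝ) * ε1 + ε1 := by
    have c1 := bnd A hAmeas hAsub hhuA
    have c2 := bnd (Set.Ioo 0 T) measurableSet_Ioo (le_refl _) hhuT
    calc |(m:ℝ) * (∫ t in A, (h t - u t)) - (∫ t in Set.Ioo 0 T, (h t - u t))|
        ≤ |(m:ℝ) * (∫ t in A, (h t - u t))| + |∫ t in Set.Ioo 0 T, (h t - u t)| := abs_sub _ _
      _ = (m:ℝ) * |∫ t in A, (h t - u t)| + |∫ t in Set.Ioo 0 T, (h t - u t)| := by
          rw [abs_mul, abs_of_nonneg hm'.le]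
      _ ≤ (m:ℝ) * ε1 + ε1 := by
          have := mul_le_mul_of_nonneg_left c1 hm'.le
          linarith
  have tri : |((m:ℝ) * (∫ t in A, u t) - (∫ t in Set.Ioo 0 T, u t))
        + ((m:ℝ) * (∫ t in A, (h t - u t)) - (∫ t in Set.Ioo 0 T, (h t - u t)))|
      ≤ |(m:ℝ) * (∫ t in A, u t) - (∫ t in Set.Ioo 0 T, u t)|
        + |(m:ℝ) * (∫ t in A, (h t - u t)) - (∫ t in Set.Ioo 0 T, (h t - u t))| := abs_add_le _ _
  have e2bound : 2 * T * ε2 ≤ ε / 4 := by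
    have hkey : ε2 * (8 * T + 8) = ε := by rw [hε2def]; field_simp
    nlinarith [hkey, hε2.le]
  have e1bound : (m:ℝ) * ε1 + ε1 ≤ ε / 4 := by
    have hkey : ε1 * (4 * ((m:ℝ) + 1)) = ε := by
      rw [hε1def]; field_simp
    nlinarith [hkey, hε1.le]
  linarith
lemma main_aux {T : ℝ} (hT : 0 < T) {d : ℕ} {m : ℕ} (hm : 0 < m)
    (Ω : Set (Fin d → ℝ)) (hΩb : Bornology.IsBounded Ω) (hΩm : MeasurableSet Ω)
    (v : Fin m → (Fin d → ℝ) → (Fin d → ℝ)) (hv : ∀ i, Continuous (v i))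
    (Q : ℕ → ℝ → (Fin d → ℝ) → (Fin d → ℝ))
    (hrep : ∀ N : ℕ, 0 < N → ∀ t ∈ Set.Ioo 0 T, ∀ x,
      Q N t x = (m:ℝ) • v ⟨gridIdx T (m * N) t % m, Nat.mod_lt _ hm⟩ x)
    (φ : ℝ × (Fin d → ℝ) → (Fin d → ℝ)) (hφ : IntegrableOn φ (Set.Ioo 0 T ×ˢ Ω)) :
    Tendsto (fun N : ℕ => ∫ p in Set.Ioo 0 T ×ˢ Ω, ∑ j, Q N p.1 p.2 j * φ p j) atTop
      (nhds (∫ p in Set.Ioo 0 T ×ˢ Ω, ∑ j, (∑ i, v i p.2) j * φ p j)) := by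
  set S : Set (ℝ × (Fin d → ℝ)) := Set.Ioo 0 T ×ˢ Ω with hSdef
  have hSm : MeasurableSet S := measurableSet_Ioo.prod hΩm
  set g : Fin m → (ℝ × (Fin d → ℝ)) → ℝ := fun i p => ∑ j, v i p.2 j * φ p j with hgdef
  -- uniform bound on `v i` over `Ω`
  obtain ⟨R, hR⟩ := hΩb.subset_closedBall (0 : Fin d → ℝ)
  have hC : ∀ i : Fin m, ∃ C : ℝ, ∀ x ∈ Ω, ‖v i x‖ ≤ C := by
    intro i
    have hbdd : BddAbove ((fun x => ‖v i x‖) '' Metric.closedBall (0 : Fin d → ℝ) R) :=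
      (isCompact_closedBall _ _).bddAbove_image ((hv i).norm.continuousOn)
    obtain ⟨C, hCub⟩ := hbdd
    exact ⟨C, fun x hx => hCub ⟨x, hR hx, rfl⟩⟩
  choose C hCb using hC
  -- integrability of the pieces
  have hφm : AEStronglyMeasurable φ (volume.restrict S) := hφ.aestronglyMeasurable
  have hgm : ∀ i : Fin m, AEStronglyMeasurable (g i) (volume.restrict S) := by
    intro i
    apply Finset.aestronglyMeasurable_fun_sum
    intro j _
    exact (((continuous_apply j).comp ((hv i).comp continuous_snd)).aestronglyMeasurable).mul
      ((continuous_apply j).comp_aestronglyMeasurable hφm)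
  have hgbound : ∀ i : Fin m, ∀ p ∈ S, |g i p| ≤ C i * d * ‖φ p‖ := by
    intro i p hp
    have hx : p.2 ∈ Ω := hp.2
    calc |g i p| ≤ ∑ j, |v i p.2 j * φ p j| := Finset.abs_sum_le_sum_abs _ _
      _ ≤ ∑ _j : Fin d, C i * ‖φ p‖ := by
          refine Finset.sum_le_sum fun j _ => ?_
          rw [abs_mul]
          have h1 : |v i p.2 j| ≤ C i := by
            have := norm_le_pi_norm (v i p.2) j
            rw [Real.norm_eq_abs] at this
            exact le_trans this (hCb i p.2 hx)
          have h2 : |φ p j| ≤ ‖φ p‖ := by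
            have := norm_le_pi_norm (φ p) j
            rwa [Real.norm_eq_abs] at this
          exact mul_le_mul h1 h2 (abs_nonneg _) (le_trans (abs_nonneg _) h1)
      _ = C i * d * ‖φ p‖ := by
          rw [Finset.sum_const, Finset.card_univ, Fintype.card_fin, nsmul_eq_mul]
          ring
  have hgint : ∀ i : Fin m, IntegrableOn (g i) S := by
    intro i
    refine Integrable.mono' ((hφ.norm).const_mul (C i * d)) (hgm i) ?_
    filter_upwards [ae_restrict_mem hSm] with p hp
    rw [Real.norm_eq_abs]
    exact hgbound i p hp
  -- inner integrals
  set H : Fin m → ℝ → ℝ := fun i t => ∫ x in Ω, g i (t, x) with hHdef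
  have hgprod : ∀ i : Fin m,
      Integrable (g i) ((volume.restrict (Set.Ioo 0 T)).prod (volume.restrict Ω)) := by
    intro i
    rw [Measure.prod_restrict, ← Measure.volume_eq_prod]
    exact hgint i
  have hHint : ∀ i : Fin m, IntegrableOn (H i) (Set.Ioo 0 T) := fun i =>
    (hgprod i).integral_prod_left
  have hfub : ∀ i : Fin m, (∫ p in S, g i p) = ∫ t in Set.Ioo 0 T, H i t := by
    intro i
    rw [hSdef, Measure.volume_eq_prod]
    exact setIntegral_prod (g i) (hgint i)
  -- right-hand side
  have hRHS : (∫ p in S, ∑ j, (∑ i, v i p.2) j * φ p j) = ∑ i, ∫ t in Set.Ioo 0 T, H i t := by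
    have heq : (fun p : ℝ × (Fin d → ℝ) => ∑ j, (∑ i, v i p.2) j * φ p j)
        = fun p => ∑ i, g i p := by
      funext p
      simp_rw [Finset.sum_apply, Finset.sum_mul, hgdef]
      exact Finset.sum_comm
    calc (∫ p in S, ∑ j, (∑ i, v i p.2) j * φ p j) = ∫ p in S, ∑ i, g i p := by rw [heq]
      _ = ∑ i, ∫ p in S, g i p := integral_finset_sum _ (fun i _ => hgint i)
      _ = ∑ i, ∫ t in Set.Ioo 0 T, H i t := Finset.sum_congr rfl fun i _ => hfub i
  rw [hRHS]
  -- left-hand side for positive N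
  have hLHS : ∀ N : ℕ, 0 < N →
      (∫ p in S, ∑ j, Q N p.1 p.2 j * φ p j)
        = ∑ i : Fin m, (m:ℝ) *
            ∫ t in Set.Ioo 0 T ∩ {t : ℝ | gridIdx T (m * N) t % m = (i:ℕ)}, H i t := by
    intro N hN
    have hPm : ∀ i : Fin m,
        MeasurableSet {p : ℝ × (Fin d → ℝ) | gridIdx T (m * N) p.1 % m = (i:ℕ)} :=
      fun i => measurable_fst (measurableSet_phase T (m*N) m i)
    have hptw : ∀ p ∈ S, (∑ j, Q N p.1 p.2 j * φ p j)
        = ∑ i : Fin m,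
            ({p : ℝ × (Fin d → ℝ) | gridIdx T (m * N) p.1 % m = (i:ℕ)}.indicator
              (fun p => (m:ℝ) * g i p)) p := by
      intro p hp
      set i0 : Fin m := ⟨gridIdx T (m * N) p.1 % m, Nat.mod_lt _ hm⟩ with hi0
      have hQp : Q N p.1 p.2 = (m:ℝ) • v i0 p.2 := hrep N hN p.1 hp.1 p.2
      have hl : (∑ j, Q N p.1 p.2 j * φ p j) = (m:ℝ) * g i0 p := by
        rw [hQp, hgdef, Finset.mul_sum]
        refine Finset.sum_congr rfl fun j _ => ?_
        simp [mul_assoc]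
      have hcond : ∀ i : Fin m,
          (p ∈ {p : ℝ × (Fin d → ℝ) | gridIdx T (m * N) p.1 % m = (i:ℕ)}) ↔ i = i0 := by
        intro i
        simp only [Set.mem_setOf_eq, hi0, Fin.ext_iff, eq_comm]
      have hr : ∑ i : Fin m,
          ({p : ℝ × (Fin d → ℝ) | gridIdx T (m * N) p.1 % m = (i:ℕ)}.indicator
            (fun p => (m:ℝ) * g i p)) p = (m:ℝ) * g i0 p := by
        rw [Finset.sum_congr rfl (fun i _ => by
          rw [Set.indicator_apply, if_congr (hcond i) rfl rfl])]
        rw [Finset.sum_ite_eq' Finset.univ i0 (fun i => (m:ℝ) * g i p)]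
        simp
      rw [hl, hr]
    rw [setIntegral_congr_fun hSm hptw]
    rw [integral_finset_sum _ (fun i _ =>
      ((hgint i).const_mul (m:ℝ)).indicator (hPm i))]
    refine Finset.sum_congr rfl fun i _ => ?_
    rw [setIntegral_indicator (hPm i)]
    have hset : S ∩ {p : ℝ × (Fin d → ℝ) | gridIdx T (m * N) p.1 % m = (i:ℕ)}
        = (Set.Ioo 0 T ∩ {t : ℝ | gridIdx T (m * N) t % m = (i:ℕ)}) ×ˢ Ω := by
      rw [hSdef]
      ext p
      simp only [Set.mem_inter_iff, Set.mem_prod, Set.mem_setOf_eq]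
      tauto
    rw [hset, Measure.volume_eq_prod]
    rw [setIntegral_prod (fun p => (m:ℝ) * g i p) ?_]
    · simp only [integral_const_mul, hHdef]
    · have hio : IntegrableOn (fun p => (m:ℝ) * g i p) S volume := (hgint i).const_mul (m:ℝ)
      exact hio.mono_set (Set.prod_mono (Set.inter_subset_left) (le_refl Ω))
  -- conclude
  refine Tendsto.congr' ?_ (tendsto_finset_sum Finset.univ fun i _ =>
    key1D hT hm i.isLt (hHint i))
  filter_upwards [eventually_ge_atTop 1] with N hN
  exact (hLHS N hN).symm
/-- Let `Ω ⊆ ℝ^d` be bounded and measurable, `σ` globally Lipschitz and `Σ` its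
coordinatewise application. Fix weights `A i, W i ∈ ℝ^{d×d}`, `B i ∈ ℝ^d` for `i = 0,…,m-1`.
The `T/N`-periodic-in-time vector fields `Q^N`, equal to `m • A i Σ(W i x + B i)` on the `i`-th
subinterval of each period, converge weakly-* in `L^∞((0,T)×Ω)^d` to the time-independent field
`x ↦ ∑ i, A i Σ(W i x + B i)`: for every `φ ∈ L¹((0,T)×Ω; ℝ^d)`,
`∫∫ Q^N(t,x)·φ(t,x) → ∫∫ (∑ i, A i Σ(W i x + B i))·φ(t,x)` as `N → ∞`. -/
theorem stmt_0 (T : ℝ) (hT : 0 < T) (d : ℕ) (hd : 1 ≤ d)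
    (Ω : Set (Fin d → ℝ)) (hΩb : Bornology.IsBounded Ω) (hΩm : MeasurableSet Ω)
    (σ : ℝ → ℝ) (K : NNReal) (hσ : LipschitzWith K σ)
    (m : ℕ) (hm : 0 < m)
    (A W : Fin m → Matrix (Fin d) (Fin d) ℝ) (B : Fin m → Fin d → ℝ)
    (Q : ℕ → ℝ → (Fin d → ℝ) → (Fin d → ℝ))
    (hQ : ∀ N : ℕ, 0 < N → ∀ n : ℕ, n < N → ∀ i : Fin m, ∀ t : ℝ,
      t ∈ Set.Ico ((i : ℝ) * T / (m * N)) (((i : ℝ) + 1) * T / (m * N)) →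
      ∀ x : Fin d → ℝ,
        Q N (t + n * T / N) x
          = (m : ℝ) • (A i).mulVec (fun j => σ ((W i).mulVec x j + B i j))) :
    ∀ φ : ℝ × (Fin d → ℝ) → (Fin d → ℝ),
      IntegrableOn φ (Set.Ioo 0 T ×ˢ Ω) →
      Tendsto
        (fun N : ℕ => ∫ p in Set.Ioo 0 T ×ˢ Ω, ∑ j, Q N p.1 p.2 j * φ p j)
        atTop
        (nhds (∫ p in Set.Ioo 0 T ×ˢ Ω,
          ∑ j, (∑ i, (A i).mulVec (fun k => σ ((W i).mulVec p.2 k + B i k))) j * φ p j)) := by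
  intro φ hφ
  set v : Fin m → (Fin d → ℝ) → (Fin d → ℝ) :=
    fun i x => (A i).mulVec (fun j => σ ((W i).mulVec x j + B i j)) with hvdef
  have hv : ∀ i : Fin m, Continuous (v i) := by
    intro i
    have hσc : Continuous σ := hσ.continuous
    rw [hvdef]
    apply continuous_pi
    intro j
    simp only [Matrix.mulVec, dotProduct]
    apply continuous_finset_sum
    intro k _
    refine continuous_const.mul (hσc.comp (Continuous.add ?_ continuous_const))
    apply continuous_finset_sum
    intro l _
    exact continuous_const.mul (continuous_apply l)
  have hrep : ∀ N : ℕ, 0 < N → ∀ t ∈ Set.Ioo 0 T, ∀ x : Fin d → ℝ,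
      Q N t x = (m:ℝ) • v ⟨gridIdx T (m * N) t % m, Nat.mod_lt _ hm⟩ x := by
    intro N hN t ht x
    have hM : 0 < m * N := Nat.mul_pos hm hN
    have hN' : (0:ℝ) < N := by exact_mod_cast hN
    have hm' : (0:ℝ) < m := by exact_mod_cast hm
    obtain ⟨hlt, hmem⟩ := mem_Ico_gridIdx hT hM ⟨ht.1.le, ht.2⟩
    set k := gridIdx T (m * N) t with hk
    have hi : k % m < m := Nat.mod_lt _ hm
    have hn : k / m < N := Nat.div_lt_of_lt_mul hlt
    have hkk : m * (k / m) + k % m = k := Nat.div_add_mod k m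
    have hkr : ((k : ℕ) : ℝ) = (m:ℝ) * ((k / m : ℕ) : ℝ) + ((k % m : ℕ) : ℝ) := by
      exact_mod_cast congrArg (fun n : ℕ => (n : ℝ)) hkk.symm
    have hcast : ((m * N : ℕ) : ℝ) = (m:ℝ) * N := by push_cast; ring
    have e1 : (k : ℝ) * T / ((m * N : ℕ) : ℝ)
        = ((k % m : ℕ) : ℝ) * T / ((m:ℝ) * N) + ((k / m : ℕ) : ℝ) * T / N := by
      rw [hcast, hkr]
      field_simp
      ring
    have e2 : ((k : ℝ) + 1) * T / ((m * N : ℕ) : ℝ)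
        = (((k % m : ℕ) : ℝ) + 1) * T / ((m:ℝ) * N) + ((k / m : ℕ) : ℝ) * T / N := by
      rw [hcast, hkr]
      field_simp
      ring
    have ht0 : t - ((k / m : ℕ) : ℝ) * T / N ∈
        Set.Ico (((k % m : ℕ) : ℝ) * T / ((m:ℝ) * N))
          ((((k % m : ℕ) : ℝ) + 1) * T / ((m:ℝ) * N)) := by
      constructor
      · have h1 := hmem.1
        rw [e1] at h1
        linarith
      · have h2 := hmem.2
        rw [e2] at h2
        linarith
    have happ := hQ N hN (k / m) hn ⟨k % m, hi⟩ (t - ((k / m : ℕ) : ℝ) * T / N) (by exact ht0) x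
    have hts : t - ((k / m : ℕ) : ℝ) * T / N + ((k / m : ℕ) : ℝ) * T / N = t := by ring
    rw [hts] at happ
    exact happ
  exact main_aux hT hm Ω hΩb hΩm v hv Q hrep φ hφ
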